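/- Let K = RatFunc ℚ with A = RatFunc.X, let V be a K-vector space, and let Q : ℤ → ℤ → V and M : ℤ → V be families satisfying: (H1) for all a, x ∈ ℤ, Q a (x+1) + A² • M (a+x+1) = A² • Q (a-1) x + M (a+x-1); and (H2) for all c ∈ ℤ, Q c 0 = (-A² - A⁻²) • M c and Q 0 c = (-A² - A⁻²) • M c. Then for all a, b ∈ ℤ with a·b > 0, the vector Q a b + A^(2·sign(a)) • M (a+b) lies in the ℤ[A, A⁻¹]-submodule of V generated by the set { M x : a·x ≥ 0, |x| < |a| + |b| } (here A^(2·sign(a)) equals A² if a > 0 and A⁻² if a < 0). -/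

import Mathlib

/-- The variable `A` of the field of rational functions `ℚ(A)`. -/
noncomputable def A : RatFunc ℚ := RatFunc.X

/-- The subring `ℤ[A, A⁻¹]` of Laurent polynomials inside `ℚ(A)`. -/
noncomputable def LaurentZA : Subalgebra ℤ (RatFunc ℚ) := Algebra.adjoin ℤ {A, A⁻¹}

/-- Abstract form of Lemma 1.6(i) ('merging unknots'): for `a·b > 0`, the diagram
`Q a b + A^(2·sign a) • M (a+b)` is a `ℤ[A,A⁻¹]`-combination of single unknots `M x`
with `a·x ≥ 0` and `|x| < |a| + |b|`. -/
theorem stmt_13 {V : Type*} [AddCommGroup V] [Module (RatFunc ℚ) V]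
    (Q : ℤ → ℤ → V) (M : ℤ → V)
    (H1 : ∀ a x : ℤ,
      Q a (x + 1) + A ^ 2 • M (a + x + 1) = A ^ 2 • Q (a - 1) x + M (a + x - 1))
    (H2 : ∀ c : ℤ, Q c 0 = (-A ^ 2 - A⁻¹ ^ 2) • M c ∧ Q 0 c = (-A ^ 2 - A⁻¹ ^ 2) • M c) :
    ∀ a b : ℤ, a * b > 0 →
      Q a b + A ^ (2 * a.sign) • M (a + b) ∈
        Submodule.span LaurentZA
          {v : V | ∃ x : ℤ, a * x ≥ 0 ∧ |x| < |a| + |b| ∧ v = M x} := by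
  have hA0 : (A : RatFunc ℚ) ≠ 0 := RatFunc.X_ne_zero
  have hA2 : A ^ 2 ∈ LaurentZA := pow_mem (Algebra.subset_adjoin (by simp)) 2
  have hAi2 : A⁻¹ ^ 2 ∈ LaurentZA := pow_mem (Algebra.subset_adjoin (by simp)) 2
  have hsm : ∀ (s : Set V) (r : RatFunc ℚ), r ∈ LaurentZA →
      ∀ v ∈ Submodule.span LaurentZA s, r • v ∈ Submodule.span LaurentZA s := by
    intro s r hr v hv
    exact Submodule.smul_mem _ (⟨r, hr⟩ : LaurentZA) hv
  have hx : A⁻¹ ^ 2 * A ^ 2 = 1 := by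
    rw [← mul_pow, inv_mul_cancel₀ hA0, one_pow]
  -- positive case key lemma
  have keyP : ∀ n : ℕ, ∀ a b : ℤ, 0 < a → 0 < b → a.natAbs + b.natAbs ≤ n →
      Q a b + A ^ 2 • M (a + b) ∈ Submodule.span LaurentZA
        {v : V | ∃ x : ℤ, 0 ≤ x ∧ x.natAbs < a.natAbs + b.natAbs ∧ v = M x} := by
    intro n
    induction n with
    | zero => intro a b ha hb h; omega
    | succ n ih =>
      intro a b ha hb hn
      by_cases hb1 : b = 1
      · subst hb1
        have e := H1 a 0
        rw [show a + 0 + 1 = a + 1 by ring, show a + 0 - 1 = a - 1 by ring,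
          show (0 : ℤ) + 1 = 1 by ring, (H2 (a - 1)).1] at e
        rw [e, smul_smul]
        exact add_mem
          (hsm _ _ (mul_mem hA2 (sub_mem (neg_mem hA2) hAi2)) _
            (Submodule.subset_span ⟨a - 1, by omega, by omega, rfl⟩))
          (Submodule.subset_span ⟨a - 1, by omega, by omega, rfl⟩)
      · by_cases ha1 : a = 1
        · subst ha1
          have e := H1 1 (b - 1)
          rw [show (1 : ℤ) + (b - 1) + 1 = 1 + b by ring,
            show (1 : ℤ) + (b - 1) - 1 = b - 1 by ring,
            show b - 1 + 1 = b by ring, show (1 : ℤ) - 1 = 0 by ring, (H2 (b - 1)).2] at e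
          rw [e, smul_smul]
          exact add_mem
            (hsm _ _ (mul_mem hA2 (sub_mem (neg_mem hA2) hAi2)) _
              (Submodule.subset_span ⟨b - 1, by omega, by omega, rfl⟩))
            (Submodule.subset_span ⟨b - 1, by omega, by omega, rfl⟩)
        · have e := H1 a (b - 1)
          rw [show a + (b - 1) + 1 = a + b by ring, show a + (b - 1) - 1 = a + b - 2 by ring,
            show b - 1 + 1 = b by ring] at e
          have h : Q a b + A ^ 2 • M (a + b) =
              A ^ 2 • (Q (a - 1) (b - 1) + A ^ 2 • M (a + b - 2)) +
                ((1 : RatFunc ℚ) - A ^ 2 * A ^ 2) • M (a + b - 2) := by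
            rw [e, sub_smul, one_smul, smul_add, smul_smul]; abel
          rw [h]
          have hIH := ih (a - 1) (b - 1) (by omega) (by omega) (by omega)
          rw [show a - 1 + (b - 1) = a + b - 2 by ring] at hIH
          have hIH' := Submodule.span_mono
            (show {v : V | ∃ x : ℤ, 0 ≤ x ∧ x.natAbs < (a - 1).natAbs + (b - 1).natAbs ∧ v = M x}
                ⊆ {v : V | ∃ x : ℤ, 0 ≤ x ∧ x.natAbs < a.natAbs + b.natAbs ∧ v = M x} by
              rintro v ⟨x, h1, h2, rfl⟩; exact ⟨x, h1, by omega, rfl⟩) hIH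
          exact add_mem (hsm _ _ hA2 _ hIH')
            (hsm _ _ (sub_mem (one_mem _) (mul_mem hA2 hA2)) _
              (Submodule.subset_span ⟨a + b - 2, by omega, by omega, rfl⟩))
  -- negative case key lemma
  have keyN : ∀ n : ℕ, ∀ a b : ℤ, a < 0 → b < 0 → a.natAbs + b.natAbs ≤ n →
      Q a b + A⁻¹ ^ 2 • M (a + b) ∈ Submodule.span LaurentZA
        {v : V | ∃ x : ℤ, x ≤ 0 ∧ x.natAbs < a.natAbs + b.natAbs ∧ v = M x} := by
    intro n
    induction n with
    | zero => intro a b ha hb h; omega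
    | succ n ih =>
      intro a b ha hb hn
      by_cases hb1 : b = -1
      · subst hb1
        have e := H1 (a + 1) (-1)
        rw [show (-1 : ℤ) + 1 = 0 by ring, show a + 1 + -1 + 1 = a + 1 by ring,
          show a + 1 - 1 = a by ring, show a + 1 + -1 - 1 = a - 1 by ring,
          (H2 (a + 1)).1] at e
        have e2 := congrArg (fun v => A⁻¹ ^ 2 • v) e
        simp only [smul_add, smul_smul] at e2
        rw [hx] at e2
        simp only [one_smul] at e2
        rw [show a + -1 = a - 1 by ring, ← e2]
        exact add_mem
          (hsm _ _ (mul_mem hAi2 (sub_mem (neg_mem hA2) hAi2)) _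
            (Submodule.subset_span ⟨a + 1, by omega, by omega, rfl⟩))
          (Submodule.subset_span ⟨a + 1, by omega, by omega, rfl⟩)
      · by_cases ha1 : a = -1
        · subst ha1
          have e := H1 0 b
          rw [show (0 : ℤ) + b + 1 = b + 1 by ring, show (0 : ℤ) - 1 = -1 by ring,
            show (0 : ℤ) + b - 1 = b - 1 by ring, (H2 (b + 1)).2] at e
          have e2 := congrArg (fun v => A⁻¹ ^ 2 • v) e
          simp only [smul_add, smul_smul] at e2
          rw [hx] at e2
          simp only [one_smul] at e2
          rw [show (-1 : ℤ) + b = b - 1 by ring, ← e2]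
          exact add_mem
            (hsm _ _ (mul_mem hAi2 (sub_mem (neg_mem hA2) hAi2)) _
              (Submodule.subset_span ⟨b + 1, by omega, by omega, rfl⟩))
            (Submodule.subset_span ⟨b + 1, by omega, by omega, rfl⟩)
        · have e := H1 (a + 1) b
          rw [show a + 1 + b + 1 = a + b + 2 by ring, show a + 1 - 1 = a by ring,
            show a + 1 + b - 1 = a + b by ring] at e
          have e2 := congrArg (fun v => A⁻¹ ^ 2 • v) e
          simp only [smul_add, smul_smul] at e2
          rw [hx] at e2
          simp only [one_smul] at e2
          have h : Q a b + A⁻¹ ^ 2 • M (a + b) =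
              A⁻¹ ^ 2 • (Q (a + 1) (b + 1) + A⁻¹ ^ 2 • M (a + b + 2)) +
                ((1 : RatFunc ℚ) - A⁻¹ ^ 2 * A⁻¹ ^ 2) • M (a + b + 2) := by
            rw [← e2, smul_add, smul_smul, sub_smul, one_smul]; abel
          rw [h]
          have hIH := ih (a + 1) (b + 1) (by omega) (by omega) (by omega)
          rw [show a + 1 + (b + 1) = a + b + 2 by ring] at hIH
          have hIH' := Submodule.span_mono
            (show {v : V | ∃ x : ℤ, x ≤ 0 ∧ x.natAbs < (a + 1).natAbs + (b + 1).natAbs ∧ v = M x}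
                ⊆ {v : V | ∃ x : ℤ, x ≤ 0 ∧ x.natAbs < a.natAbs + b.natAbs ∧ v = M x} by
              rintro v ⟨x, h1, h2, rfl⟩; exact ⟨x, h1, by omega, rfl⟩) hIH
          exact add_mem (hsm _ _ hAi2 _ hIH')
            (hsm _ _ (sub_mem (one_mem _) (mul_mem hAi2 hAi2)) _
              (Submodule.subset_span ⟨a + b + 2, by omega, by omega, rfl⟩))
  intro a b hab
  rcases mul_pos_iff.mp hab with ⟨ha, hb⟩ | ⟨ha, hb⟩
  · have hs : a.sign = 1 := Int.sign_eq_one_iff_pos.mpr ha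
    rw [hs, show (2 : ℤ) * 1 = ((2 : ℕ) : ℤ) by norm_num, zpow_natCast]
    refine Submodule.span_mono ?_ (keyP (a.natAbs + b.natAbs) a b ha hb le_rfl)
    rintro v ⟨x, h1, h2, rfl⟩
    refine ⟨x, mul_nonneg ha.le h1, ?_, rfl⟩
    simp only [Int.abs_eq_natAbs]
    omega
  · have hs : a.sign = -1 := Int.sign_eq_neg_one_iff_neg.mpr ha
    rw [hs, show (2 : ℤ) * (-1) = -((2 : ℕ) : ℤ) by norm_num, zpow_neg, zpow_natCast, ← inv_pow]
    refine Submodule.span_mono ?_ (keyN (a.natAbs + b.natAbs) a b ha hb le_rfl)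
    rintro v ⟨x, h1, h2, rfl⟩
    refine ⟨x, ?_, ?_, rfl⟩
    · have h := mul_nonneg (neg_nonneg.mpr ha.le) (neg_nonneg.mpr h1)
      rwa [neg_mul_neg] at h
    · simp only [Int.abs_eq_natAbs]
      omega
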